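/- Let X_1, ..., X_n be i.i.d. with distribution (1-π)F + πH, where π ∈ (0,1), F has a Lebesgue density f, and H is discrete with countable support. Write X_i = (1−Λ_i)V_i + Λ_i U_i with Λ_i ~ Bernoulli(π), V_i ~ F, U_i ~ H all independent. Let U_n¹ be the set of values appearing exactly once among X_1,...,X_n, let f̂_{U_n¹} be the KDE built on {X_i : X_i ∈ U_n¹} and f̂^V the KDE built by replacing those X_i by the corresponding V_i. Then almost surely ∫ |f̂^V(x) − f̂_{U_n¹}(x)| dx ≤ (2/(|U_n¹| ∨ 1)) Σ_{i=1}^n 1{X_i ∈ S \ R_n}, where S is the support of H and R_n the set of repeated values. -/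

import Mathlib

open MeasureTheory ProbabilityTheory Filter
open scoped ENNReal Classical BigOperators

noncomputable section

variable {Ω : Type*}

/-- The (random) set of values appearing at least twice among `X 0, ..., X (n-1)`. -/
def repeatedSet (X : ℕ → Ω → ℝ) (n : ℕ) (ω : Ω) : Set ℝ :=
  {x | 2 ≤ ((Finset.range n).filter (fun i => X i ω = x)).card}

/-- The (random) set of values appearing exactly once among `X 0, ..., X (n-1)`. -/
def uniqueSet (X : ℕ → Ω → ℝ) (n : ℕ) (ω : Ω) : Set ℝ :=
  {x | ((Finset.range n).filter (fun i => X i ω = x)).card = 1}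

/-- Indices `i < n` whose observation `X i` appears exactly once in the sample. -/
def uniqueIdx (X : ℕ → Ω → ℝ) (n : ℕ) (ω : Ω) : Finset ℕ :=
  (Finset.range n).filter (fun i => ((Finset.range n).filter (fun j => X j ω = X i ω)).card = 1)

/-- Kernel density estimator built on the points `Z i`, `i ∈ pts`, with kernel `K` and
bandwidth `h`. -/
def kdeOn (K : ℝ → ℝ) (h : ℝ) (pts : Finset ℕ) (Z : ℕ → ℝ) (x : ℝ) : ℝ :=
  (1 / ((max pts.card 1 : ℕ) * h)) * ∑ i ∈ pts, K ((x - Z i) / h)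

/-- The Bernoulli(π) law on ℝ, i.e. `(1-π)δ₀ + πδ₁`. -/
def bernoulliLaw (π : ℝ) : Measure ℝ :=
  ENNReal.ofReal (1 - π) • Measure.dirac (0 : ℝ) + ENNReal.ofReal π • Measure.dirac 1


/-- Change-of-variables facts for a rescaled, translated kernel. -/
lemma stmt9_kde_int (K : ℝ → ℝ) (hKint : Integrable K volume) (hK1 : ∫ u, K u = 1)
    (h : ℝ) (hh : 0 < h) (a : ℝ) :
    Integrable (fun x => K ((x - a) / h)) volume ∧ (∫ x, K ((x - a) / h)) = h := by
  constructor
  · exact (hKint.comp_div hh.ne').comp_sub_right a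
  · have : (∫ x, K ((x - a) / h)) = ∫ x, (fun y => K (y / h)) (x - a) := rfl
    rw [this, integral_sub_right_eq_self (fun y => K (y / h)) a,
      MeasureTheory.Measure.integral_comp_div, hK1, smul_eq_mul, mul_one, abs_of_pos hh]

/-- Deterministic part of the bound. -/
lemma stmt9_det_bound (K : ℝ → ℝ) (hK0 : ∀ u, 0 ≤ K u) (hKint : Integrable K volume)
    (hK1 : ∫ u, K u = 1) (h : ℝ) (hh : 0 < h)
    (X V : ℕ → Ω → ℝ) (ω : Ω) (S : Set ℝ)
    (hx : ∀ i, X i ω = V i ω ∨ X i ω ∈ S) (n : ℕ) :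
    (∫ x, |kdeOn K h (uniqueIdx X n ω) (fun i => V i ω) x -
           kdeOn K h (uniqueIdx X n ω) (fun i => X i ω) x|)
      ≤ (2 / ((max (uniqueIdx X n ω).card 1 : ℕ) : ℝ)) *
          ∑ i ∈ Finset.range n, (if X i ω ∈ S \ repeatedSet X n ω then (1:ℝ) else 0) := by
  set pts := uniqueIdx X n ω with hpts
  set m : ℝ := ((max pts.card 1 : ℕ) : ℝ) with hm
  have hm1 : (1:ℝ) ≤ m := by
    rw [hm]; exact_mod_cast le_max_right pts.card 1
  have hmpos : 0 < m := lt_of_lt_of_le one_pos hm1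
  set D : Finset ℕ := pts.filter (fun i => ¬ (V i ω = X i ω)) with hD
  set c : ℝ := 1 / (m * h) with hc
  have hcpos : 0 < c := by positivity
  have key : ∀ x, kdeOn K h pts (fun i => V i ω) x - kdeOn K h pts (fun i => X i ω) x
      = c * ∑ i ∈ D, (K ((x - V i ω)/h) - K ((x - X i ω)/h)) := by
    intro x
    unfold kdeOn
    rw [← mul_sub, ← Finset.sum_sub_distrib, hD, Finset.sum_filter]
    congr 1
    apply Finset.sum_congr rfl
    intro i _
    by_cases hvx : V i ω = X i ω
    · simp [hvx]
    · simp [hvx]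
  set g : ℝ → ℝ := fun x => c * ∑ i ∈ D, (K ((x - V i ω)/h) + K ((x - X i ω)/h)) with hg
  have hterm : ∀ i : ℕ, Integrable (fun x => K ((x - V i ω)/h) + K ((x - X i ω)/h)) volume :=
    fun i => (stmt9_kde_int K hKint hK1 h hh _).1.add (stmt9_kde_int K hKint hK1 h hh _).1
  have hg_int : Integrable g volume :=
    (integrable_finset_sum D (fun i _ => hterm i)).const_mul c
  have habs : ∀ x, |kdeOn K h pts (fun i => V i ω) x - kdeOn K h pts (fun i => X i ω) x| ≤ g x := by
    intro x
    rw [key x, abs_mul, abs_of_pos hcpos, hg]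
    refine mul_le_mul_of_nonneg_left ?_ hcpos.le
    refine (Finset.abs_sum_le_sum_abs _ _).trans (Finset.sum_le_sum fun i _ => ?_)
    calc |K ((x - V i ω)/h) - K ((x - X i ω)/h)|
        ≤ |K ((x - V i ω)/h)| + |K ((x - X i ω)/h)| := abs_sub _ _
      _ = K ((x - V i ω)/h) + K ((x - X i ω)/h) := by
          rw [abs_of_nonneg (hK0 _), abs_of_nonneg (hK0 _)]
  have step1 : (∫ x, |kdeOn K h pts (fun i => V i ω) x - kdeOn K h pts (fun i => X i ω) x|)
      ≤ ∫ x, g x :=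
    integral_mono_of_nonneg (Filter.Eventually.of_forall fun x => abs_nonneg _) hg_int
      (Filter.Eventually.of_forall habs)
  have hgint_val : (∫ x, g x) = 2 * D.card / m := by
    rw [hg, integral_const_mul, integral_finset_sum D (fun i _ => hterm i)]
    have : ∀ i ∈ D, (∫ x, (K ((x - V i ω)/h) + K ((x - X i ω)/h))) = 2 * h := by
      intro i _
      rw [integral_add (stmt9_kde_int K hKint hK1 h hh _).1 (stmt9_kde_int K hKint hK1 h hh _).1,
        (stmt9_kde_int K hKint hK1 h hh _).2, (stmt9_kde_int K hKint hK1 h hh _).2]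
      ring
    rw [Finset.sum_congr rfl this, Finset.sum_const, nsmul_eq_mul, hc]
    field_simp
  have hsub : D ⊆ Finset.range n := by
    intro i hi
    have := Finset.mem_filter.mp hi
    exact Finset.mem_filter.mp this.1 |>.1
  have hind : ∀ i ∈ D, (if X i ω ∈ S \ repeatedSet X n ω then (1:ℝ) else 0) = 1 := by
    intro i hi
    have hiD := Finset.mem_filter.mp hi
    have hipts := Finset.mem_filter.mp hiD.1
    have hXS : X i ω ∈ S := (hx i).resolve_left (fun hxe => hiD.2 hxe.symm)
    have hnotrep : X i ω ∉ repeatedSet X n ω := by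
      intro hrep
      have h2 : 2 ≤ ((Finset.range n).filter (fun j => X j ω = X i ω)).card := hrep
      have h1 := hipts.2
      omega
    simp [Set.mem_diff, hXS, hnotrep]
  have hsum : (D.card : ℝ)
      ≤ ∑ i ∈ Finset.range n, (if X i ω ∈ S \ repeatedSet X n ω then (1:ℝ) else 0) := by
    calc (D.card : ℝ) = ∑ i ∈ D, (if X i ω ∈ S \ repeatedSet X n ω then (1:ℝ) else 0) := by
          rw [Finset.sum_congr rfl hind]; simp
      _ ≤ _ := Finset.sum_le_sum_of_subset_of_nonneg hsub (fun i _ _ => by positivity)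
  calc (∫ x, |kdeOn K h pts (fun i => V i ω) x - kdeOn K h pts (fun i => X i ω) x|)
      ≤ 2 * D.card / m := step1.trans_eq hgint_val
    _ = (2 / m) * D.card := by ring
    _ ≤ (2 / m) * ∑ i ∈ Finset.range n, (if X i ω ∈ S \ repeatedSet X n ω then (1:ℝ) else 0) :=
        mul_le_mul_of_nonneg_left hsum (by positivity)

/-- almost-sure L¹ coupling bound between the KDE built on the uniquely-appearing
observations and the KDE built on the corresponding latent continuous samples. -/
theorem stmt9 [MeasurableSpace Ω] (P : Measure Ω) [IsProbabilityMeasure P]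
    (X Λ V U : ℕ → Ω → ℝ)
    (hΛmeas : ∀ i, Measurable (Λ i)) (hVmeas : ∀ i, Measurable (V i))
    (hUmeas : ∀ i, Measurable (U i))
    (π : ℝ) (hπ : π ∈ Set.Ioo (0 : ℝ) 1)
    (F Hm : Measure ℝ) [IsProbabilityMeasure F] [IsProbabilityMeasure Hm]
    (hF : F ≪ volume)
    (S : Set ℝ) (hS : S.Countable) (hHS : Hm Sᶜ = 0)
    (hcoupling : ∀ i ω, X i ω = (1 - Λ i ω) * V i ω + Λ i ω * U i ω)
    (hindep : iIndepFun
      (fun p : ℕ × Fin 3 => ![Λ p.1, V p.1, U p.1] p.2) P)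
    (hlawΛ : ∀ i, Measure.map (Λ i) P = bernoulliLaw π)
    (hlawV : ∀ i, Measure.map (V i) P = F)
    (hlawU : ∀ i, Measure.map (U i) P = Hm)
    (K : ℝ → ℝ) (hK0 : ∀ u, 0 ≤ K u) (hKint : Integrable K volume) (hK1 : ∫ u, K u = 1)
    (h : ℝ) (hh : 0 < h) :
    ∀ᵐ ω ∂P, ∀ n : ℕ,
      (∫ x, |kdeOn K h (uniqueIdx X n ω) (fun i => V i ω) x -
             kdeOn K h (uniqueIdx X n ω) (fun i => X i ω) x|)
        ≤ (2 / ((max (uniqueIdx X n ω).card 1 : ℕ) : ℝ)) *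
            ∑ i ∈ Finset.range n, (if X i ω ∈ S \ repeatedSet X n ω then (1 : ℝ) else 0) := by
  
  have hΛae : ∀ i : ℕ, ∀ᵐ ω ∂P, Λ i ω = 0 ∨ Λ i ω = 1 := by
    intro i
    have hms : MeasurableSet ({0, 1}ᶜ : Set ℝ) :=
      (Set.Finite.measurableSet (Set.toFinite _)).compl
    have h0 : P ((Λ i) ⁻¹' ({0,1}ᶜ : Set ℝ)) = 0 := by
      rw [← Measure.map_apply (hΛmeas i) hms, hlawΛ i]
      simp [bernoulliLaw, Measure.dirac_apply' _ hms]
    rw [ae_iff]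
    have : {ω | ¬(Λ i ω = 0 ∨ Λ i ω = 1)} = (Λ i) ⁻¹' ({0,1}ᶜ : Set ℝ) := by
      ext ω; simp [not_or]
    rw [this]; exact h0
  have hUae : ∀ i : ℕ, ∀ᵐ ω ∂P, U i ω ∈ S := by
    intro i
    have hms : MeasurableSet Sᶜ := hS.measurableSet.compl
    have h0 : P ((U i) ⁻¹' Sᶜ) = 0 := by
      rw [← Measure.map_apply (hUmeas i) hms, hlawU i]; exact hHS
    rw [ae_iff]; exact h0
  have hXae : ∀ᵐ ω ∂P, ∀ i, X i ω = V i ω ∨ X i ω ∈ S := by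
    rw [ae_all_iff]
    intro i
    filter_upwards [hΛae i, hUae i] with ω h01 hUS
    rcases h01 with h0 | h1
    · left; rw [hcoupling i ω, h0]; ring
    · right
      have hXU : X i ω = U i ω := by rw [hcoupling i ω, h1]; ring
      rw [hXU]; exact hUS
  filter_upwards [hXae] with ω hx n
  exact stmt9_det_bound K hK0 hKint hK1 h hh X V ω S hx n
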